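/- For every complex number z, |e^z - 1| ≤ (e^{|z|} - 1) · exp(-(|z| - Re z)/2). -/

import Mathlib

open NormedSpace in
lemma norm_exp_sub_exp_neg_le (w : ℂ) :
    ‖Complex.exp w - Complex.exp (-w)‖ ≤
      Real.exp ‖w‖ - Real.exp (-‖w‖) := by
  have hw : Summable fun n : ℕ => (w : ℂ) ^ n / (Nat.factorial n) := expSeries_div_summable w
  have hw' : Summable fun n : ℕ => (-w : ℂ) ^ n / (Nat.factorial n) := expSeries_div_summable (-w)
  have ha : Summable fun n : ℕ => (‖w‖ : ℝ) ^ n / (Nat.factorial n) :=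
    expSeries_div_summable _
  have ha' : Summable fun n : ℕ => (-‖w‖ : ℝ) ^ n / (Nat.factorial n) :=
    expSeries_div_summable _
  have h1 : Complex.exp w - Complex.exp (-w) = ∑' n : ℕ, (w ^ n / (Nat.factorial n) - (-w) ^ n / (Nat.factorial n)) := by
    rw [Complex.exp_eq_exp_ℂ]
    simp only [exp_eq_tsum_div]
    exact (hw.hasSum.sub hw'.hasSum).tsum_eq.symm
  have h2 : Real.exp ‖w‖ - Real.exp (-‖w‖)
      = ∑' n : ℕ, (‖w‖ ^ n / (Nat.factorial n) - (-‖w‖) ^ n / (Nat.factorial n)) := by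
    rw [Real.exp_eq_exp_ℝ]
    simp only [exp_eq_tsum_div]
    exact (ha.hasSum.sub ha'.hasSum).tsum_eq.symm
  rw [h1, h2]
  refine (norm_tsum_le_tsum_norm ((hw.sub hw').norm)).trans (Summable.tsum_le_tsum ?_
    (hw.sub hw').norm (ha.sub ha'))
  intro n
  rcases Nat.even_or_odd n with he | ho
  · simp [he.neg_pow]
  · rw [ho.neg_pow, ho.neg_pow]
    simp only [neg_div, sub_neg_eq_add, ← two_mul]
    apply le_of_eq
    simp [norm_mul, norm_div, norm_pow, Complex.norm_natCast]

theorem abs_exp_sub_one_le (z : ℂ) :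
    ‖Complex.exp z - 1‖ ≤
      (Real.exp ‖z‖ - 1) * Real.exp (-(‖z‖ - z.re) / 2) := by
  have hfac : Complex.exp z - 1 = Complex.exp (z / 2) * (Complex.exp (z / 2) - Complex.exp (-(z / 2))) := by
    rw [mul_sub, ← Complex.exp_add, ← Complex.exp_add]
    ring_nf
    simp [Complex.exp_zero]
    ring
  rw [hfac, norm_mul, Complex.norm_exp]
  have hb := norm_exp_sub_exp_neg_le (z / 2)
  have habs : ‖z / 2‖ = ‖z‖ / 2 := by
    simp [map_div₀]
  rw [habs] at hb
  calc Real.exp (z / 2).re * ‖Complex.exp (z / 2) - Complex.exp (-(z / 2))‖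
      ≤ Real.exp (z / 2).re * (Real.exp (‖z‖ / 2) - Real.exp (-(‖z‖ / 2))) := by
        exact mul_le_mul_of_nonneg_left hb (Real.exp_nonneg _)
    _ = (Real.exp ‖z‖ - 1) * Real.exp (-(‖z‖ - z.re) / 2) := by
        rw [sub_mul, one_mul, mul_sub, ← Real.exp_add, ← Real.exp_add, ← Real.exp_add]
        have : (z / 2).re = z.re / 2 := by simp
        rw [this]
        ring_nf
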